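/- If G is an r-robust graph and G' is obtained from G by adding one new vertex v together with edges from v to at least r vertices of G, then G' is r-robust. -/

import Mathlib

open SimpleGraph

variable {V : Type*}

/-- A set `S` is `r`-reachable if some vertex in `S` has at least `r` neighbors outside `S`. -/
def rReachable (G : SimpleGraph V) (r : ℕ) (S : Set V) : Prop :=
  ∃ i ∈ S, r ≤ ((G.neighborSet i) \ S).ncard

/-- A graph is `r`-robust if for every pair of nonempty disjoint vertex subsets,
at least one is `r`-reachable. -/
def rRobust (G : SimpleGraph V) (r : ℕ) : Prop :=
  ∀ A B : Set V, A.Nonempty → B.Nonempty → Disjoint A B →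
    rReachable G r A ∨ rReachable G r B

/-- A graph is `r`-connected if it has more than `r` vertices and removing any set of
fewer than `r` vertices leaves the graph connected. -/
def rConnected [Fintype V] (G : SimpleGraph V) (r : ℕ) : Prop :=
  r < Fintype.card V ∧ ∀ T : Set V, T.ncard < r → (G.induce Tᶜ).Connected

/-- The graph obtained from `G` by adding a new vertex (`none`) joined to each vertex in `N`. -/
def addVertex (G : SimpleGraph V) (N : Set V) : SimpleGraph (Option V) :=
  SimpleGraph.fromRel fun a b =>
    match a, b with
    | some u, some v => G.Adj u v
    | some u, none => u ∈ N
    | none, some _ => False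
    | none, none => False


lemma addVertex_adj_some_some (G : SimpleGraph V) (N : Set V) (u w : V) :
    (addVertex G N).Adj (some u) (some w) ↔ G.Adj u w := by
  constructor
  · rintro ⟨h, h1 | h1⟩
    · exact h1
    · exact h1.symm
  · intro h
    exact ⟨fun he => G.ne_of_adj h (Option.some.inj he), Or.inl h⟩

lemma addVertex_adj_none (G : SimpleGraph V) (N : Set V) (u : V) :
    (addVertex G N).Adj none (some u) ↔ u ∈ N := by
  constructor
  · rintro ⟨h, h1 | h1⟩
    · exact h1.elim
    · exact h1
  · intro h
    exact ⟨fun he => (nomatch he), Or.inr h⟩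

lemma reach_lift [Fintype V] (G : SimpleGraph V) (N : Set V) (r : ℕ) (S : Set (Option V))
    (h : rReachable G r (some ⁻¹' S)) : rReachable (addVertex G N) r S := by
  obtain ⟨i, hi, hcard⟩ := h
  refine ⟨some i, hi, ?_⟩
  have hsub : some '' (G.neighborSet i \ (some ⁻¹' S)) ⊆
      (addVertex G N).neighborSet (some i) \ S := by
    rintro _ ⟨x, ⟨hadj, hx⟩, rfl⟩
    exact ⟨(addVertex_adj_some_some G N i x).2 hadj, hx⟩
  calc r ≤ (G.neighborSet i \ (some ⁻¹' S)).ncard := hcard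
    _ = (some '' (G.neighborSet i \ (some ⁻¹' S))).ncard :=
        (Set.ncard_image_of_injective _ (Option.some_injective V)).symm
    _ ≤ _ := Set.ncard_le_ncard hsub ((Set.toFinite _).diff)

lemma singleton_reach [Fintype V] (G : SimpleGraph V) (N : Set V) (r : ℕ) (hN : r ≤ N.ncard)
    (B : Set (Option V)) (hB : B.Nonempty) (hB' : ¬ (some ⁻¹' B).Nonempty) :
    rReachable (addVertex G N) r B := by
  have hnB : (none : Option V) ∈ B := by
    obtain ⟨b, hb⟩ := hB
    cases b with
    | none => exact hb
    | some x => exact absurd ⟨x, hb⟩ hB'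
  refine ⟨none, hnB, ?_⟩
  have hsub : some '' N ⊆ (addVertex G N).neighborSet none \ B := by
    rintro _ ⟨x, hx, rfl⟩
    exact ⟨(addVertex_adj_none G N x).2 hx, fun h => hB' ⟨x, h⟩⟩
  calc r ≤ N.ncard := hN
    _ = (some '' N).ncard := (Set.ncard_image_of_injective _ (Option.some_injective V)).symm
    _ ≤ _ := Set.ncard_le_ncard hsub ((Set.toFinite _).diff)

theorem stmt4 [Fintype V] (G : SimpleGraph V) (r : ℕ) (N : Set V)
    (hN : r ≤ N.ncard) (hrob : rRobust G r) :
    rRobust (addVertex G N) r := by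
  intro A B hA hB hdisj
  by_cases hA' : (some ⁻¹' A).Nonempty
  · by_cases hB' : (some ⁻¹' B).Nonempty
    · rcases hrob _ _ hA' hB' (hdisj.preimage _) with h | h
      · exact Or.inl (reach_lift G N r A h)
      · exact Or.inr (reach_lift G N r B h)
    · exact Or.inr (singleton_reach G N r hN B hB hB')
  · exact Or.inl (singleton_reach G N r hN A hA hA')
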